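/- Let p be an odd prime, a a p-cycle in S_p generating a Sylow p-subgroup, and Y = N_{S_p}(⟨a⟩). Then Y has exactly one conjugacy class contained in Y ∩ A_p whose Y-centralizer equals its (Y ∩ A_p)-centralizer, namely the class of a; equivalently, the class of a is the unique split class of Y. -/

import Mathlib

open Equiv Equiv.Perm Subgroup

section Std

variable {p : ℕ} [hpF : Fact p.Prime]

/-- The standard `p`-cycle on `ZMod p`. -/
private def Cc (p : ℕ) : Equiv.Perm (ZMod p) := Equiv.addLeft 1

/-- Multiplication by units, as permutations. -/
private def Mu (p : ℕ) : (ZMod p)ˣ →* Equiv.Perm (ZMod p) :=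
  MulAction.toPermHom (ZMod p)ˣ (ZMod p)

private lemma Mu_apply (u : (ZMod p)ˣ) (t : ZMod p) : Mu p u t = (u : ZMod p) * t := rfl

private lemma zpow_addLeft' (a : ZMod p) (n : ℤ) :
    Equiv.addLeft a ^ n = Equiv.addLeft (n • a) := by
  induction n using Int.induction_on with
  | zero => ext t; simp
  | succ k ih => rw [zpow_add_one, ih]; ext t; simp [add_smul]
  | pred k ih => rw [zpow_sub_one, ih]; ext t; simp [sub_smul, Equiv.Perm.inv_def]; ring

private lemma Cc_zpow (n : ℤ) : Cc p ^ n = Equiv.addLeft (n : ZMod p) := by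
  rw [Cc, zpow_addLeft']
  congr 1
  rw [zsmul_eq_mul, mul_one]

private lemma addLeft_mem_zpowers (w : ZMod p) :
    Equiv.addLeft w ∈ Subgroup.zpowers (Cc p) := by
  haveI : NeZero p := ⟨hpF.out.ne_zero⟩
  refine ⟨(w.val : ℤ), ?_⟩
  show Cc p ^ ((w.val : ℤ)) = _
  rw [Cc_zpow]
  congr 1
  push_cast
  exact ZMod.natCast_rightInverse w

private lemma zpowers_form {h : Equiv.Perm (ZMod p)} (hh : h ∈ Subgroup.zpowers (Cc p)) :
    ∃ w : ZMod p, h = Equiv.addLeft w := by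
  obtain ⟨k, hk⟩ := Subgroup.mem_zpowers_iff.mp hh
  exact ⟨(k : ZMod p), by rw [← hk, Cc_zpow]⟩

private lemma Mu_conj (u : (ZMod p)ˣ) (w : ZMod p) :
    Mu p u * Equiv.addLeft w * (Mu p u)⁻¹ = Equiv.addLeft ((u : ZMod p) * w) := by
  rw [← map_inv]
  ext t
  simp only [Equiv.Perm.coe_mul, Function.comp_apply, Equiv.coe_addLeft, Mu_apply]
  have hu : (u : ZMod p) * (u⁻¹ : (ZMod p)ˣ) = 1 := by
    rw [← Units.val_mul, mul_inv_cancel, Units.val_one]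
  linear_combination t * hu

private lemma Mu_mem_normalizer (u : (ZMod p)ˣ) :
    Mu p u ∈ Subgroup.normalizer ((Subgroup.zpowers (Cc p) : Subgroup (Equiv.Perm (ZMod p))) : Set (Equiv.Perm (ZMod p))) := by
  rw [Subgroup.mem_normalizer_iff]
  intro h
  constructor
  · intro hh
    obtain ⟨w, rfl⟩ := zpowers_form hh
    rw [Mu_conj]
    exact addLeft_mem_zpowers _
  · intro hh
    obtain ⟨w, hw⟩ := zpowers_form hh
    have : h = Mu p u⁻¹ * Equiv.addLeft w * (Mu p u⁻¹)⁻¹ := by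
      rw [map_inv, inv_inv, ← hw]
      group
    rw [this, Mu_conj]
    exact addLeft_mem_zpowers _

private lemma commute_addLeft {m : ZMod p} (hm : m ≠ 0) (z : Equiv.Perm (ZMod p))
    (hz : z * Equiv.addLeft m = Equiv.addLeft m * z) : z = Equiv.addLeft (z 0) := by
  haveI : NeZero p := ⟨hpF.out.ne_zero⟩
  have hstep : ∀ t, z (m + t) = m + z t := by
    intro t
    have := congrFun (congrArg (fun (f : Equiv.Perm (ZMod p)) => (f : ZMod p → ZMod p)) hz) t
    simpa using this
  have key : ∀ n : ℕ, z ((n : ZMod p) * m) = (n : ZMod p) * m + z 0 := by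
    intro n
    induction n with
    | zero => simp
    | succ k ih =>
      have h1 : ((k + 1 : ℕ) : ZMod p) * m = m + (k : ZMod p) * m := by push_cast; ring
      rw [h1, hstep, ih]
      ring
  ext t
  have h1 : ((t * m⁻¹).val : ZMod p) * m = t := by
    rw [ZMod.natCast_rightInverse (t * m⁻¹)]
    field_simp
  calc z t = z (((t * m⁻¹).val : ZMod p) * m) := by rw [h1]
    _ = ((t * m⁻¹).val : ZMod p) * m + z 0 := key _
    _ = z 0 + t := by rw [h1]; ring
    _ = Equiv.addLeft (z 0) t := rfl

private lemma normalizer_form {y : Equiv.Perm (ZMod p)}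
    (hy : y ∈ Subgroup.normalizer ((Subgroup.zpowers (Cc p) : Subgroup (Equiv.Perm (ZMod p))) : Set (Equiv.Perm (ZMod p)))) :
    ∃ (u : (ZMod p)ˣ) (w : ZMod p), y = Mu p u * Equiv.addLeft w := by
  have h1 : y * Cc p * y⁻¹ ∈ Subgroup.zpowers (Cc p) :=
    (Subgroup.mem_normalizer_iff.mp hy (Cc p)).mp (Subgroup.mem_zpowers _)
  obtain ⟨n, hn⟩ := Subgroup.mem_zpowers_iff.mp h1
  rw [Cc_zpow] at hn
  have hn0 : ((n : ℤ) : ZMod p) ≠ 0 := by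
    intro h0
    rw [h0] at hn
    have hc1 : Cc p = 1 := by
      have h2 : y * Cc p * y⁻¹ = 1 := by
        rw [← hn]; ext t; simp
      have := congrArg (fun w => y⁻¹ * w * y) h2
      simpa [mul_assoc] using this
    have := congrFun (congrArg (fun (f : Equiv.Perm (ZMod p)) => (f : ZMod p → ZMod p)) hc1) 0
    simp [Cc] at this
  set u : (ZMod p)ˣ := Units.mk0 _ hn0 with hu_def
  have hu : y * Cc p * y⁻¹ = Mu p u * Cc p * (Mu p u)⁻¹ := by
    have := Mu_conj u (1 : ZMod p)
    rw [mul_one] at this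
    rw [show Equiv.addLeft (1 : ZMod p) = Cc p from rfl] at this
    rw [this, ← hn]
    rfl
  set z := (Mu p u)⁻¹ * y with hz_def
  have hzc : z * Cc p * z⁻¹ = Cc p := by
    have h3 : z * Cc p * z⁻¹ = (Mu p u)⁻¹ * (y * Cc p * y⁻¹) * Mu p u := by
      rw [hz_def]; group
    rw [h3, hu]; group
  have hz : z * Cc p = Cc p * z := by
    have := congrArg (fun w => w * z) hzc
    simpa [mul_assoc] using this
  have hzl := commute_addLeft (one_ne_zero) z (by rwa [show Equiv.addLeft (1 : ZMod p) = Cc p from rfl])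
  refine ⟨u, z 0, ?_⟩
  rw [← hzl, hz_def]
  group

private lemma exists_gen (hp2 : p ≠ 2) :
    ∃ g : (ZMod p)ˣ, (∀ x : (ZMod p)ˣ, x ∈ Subgroup.zpowers g) ∧ g ≠ 1 := by
  obtain ⟨g, hg⟩ := IsCyclic.exists_generator (α := (ZMod p)ˣ)
  refine ⟨g, hg, ?_⟩
  intro h1
  haveI : Fact (2 < p) := ⟨lt_of_le_of_ne hpF.out.two_le (Ne.symm hp2)⟩
  have hm : (-1 : (ZMod p)ˣ) ∈ Subgroup.zpowers g := hg _
  rw [h1, Subgroup.zpowers_one_eq_bot, Subgroup.mem_bot] at hm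
  have : (-1 : ZMod p) = 1 := by
    have := congrArg (Units.val) hm
    simpa using this
  exact ZMod.neg_one_ne_one this

private lemma sign_Mu_gen (hp2 : p ≠ 2) {g : (ZMod p)ˣ}
    (hg : ∀ x : (ZMod p)ˣ, x ∈ Subgroup.zpowers g) (hg1 : g ≠ 1) :
    Equiv.Perm.sign (Mu p g) = -1 := by
  haveI : NeZero p := ⟨hpF.out.ne_zero⟩
  have hgv : (g : ZMod p) ≠ 1 := fun h => hg1 (Units.ext (by simpa using h))
  have hfix : ∀ t : ZMod p, Mu p g t = t ↔ t = 0 := by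
    intro t
    rw [Mu_apply]
    constructor
    · intro h
      by_contra ht
      exact hgv (mul_right_cancel₀ ht (by rwa [one_mul]))
    · intro h; rw [h, mul_zero]
  have hcyc : (Mu p g).IsCycle := by
    refine ⟨1, ?_, ?_⟩
    · intro h; exact one_ne_zero ((hfix 1).mp h)
    · intro y hy
      have hy0 : y ≠ 0 := fun h => hy (by rw [h]; exact (hfix 0).mpr rfl)
      obtain ⟨k, hk⟩ := Subgroup.mem_zpowers_iff.mp (hg (Units.mk0 y hy0))
      refine ⟨k, ?_⟩
      rw [← map_zpow]
      rw [Mu_apply, mul_one, hk]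
      rfl
  have hsupp : (Mu p g).support = {(0 : ZMod p)}ᶜ := by
    ext t
    simp only [Equiv.Perm.mem_support, Finset.mem_compl, Finset.mem_singleton]
    exact not_congr (hfix t)
  have hcard : (Mu p g).support.card = p - 1 := by
    rw [hsupp, Finset.card_compl, Finset.card_singleton, ZMod.card]
  have heven : Even (p - 1) := Nat.Odd.sub_odd (hpF.out.odd_of_ne_two hp2) odd_one
  rw [hcyc.sign, hcard, heven.neg_one_pow]

private lemma isCycle_Cc : (Cc p).IsCycle := by
  haveI : NeZero p := ⟨hpF.out.ne_zero⟩
  refine ⟨0, ?_, ?_⟩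
  · show (1 : ZMod p) + 0 ≠ 0
    simpa using (one_ne_zero : (1 : ZMod p) ≠ 0)
  · intro y hy
    refine ⟨(y.val : ℤ), ?_⟩
    rw [Cc_zpow]
    show ((y.val : ℤ) : ZMod p) + 0 = y
    push_cast
    rw [add_zero]
    exact ZMod.natCast_rightInverse y

private lemma support_Cc : (Cc p).support = Finset.univ := by
  ext t
  simp only [Equiv.Perm.mem_support, Finset.mem_univ, iff_true]
  show (1 : ZMod p) + t ≠ t
  intro h
  exact one_ne_zero (by rwa [add_eq_right] at h)

private lemma sign_Cc (hp2 : p ≠ 2) : Equiv.Perm.sign (Cc p) = 1 := by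
  have : (Cc p).support.card = p := by rw [support_Cc, Finset.card_univ, ZMod.card]
  rw [isCycle_Cc.sign, this, (hpF.out.odd_of_ne_two hp2).neg_one_pow, neg_neg]

private lemma sign_addLeft (hp2 : p ≠ 2) (w : ZMod p) :
    Equiv.Perm.sign (Equiv.addLeft w) = 1 := by
  haveI : NeZero p := ⟨hpF.out.ne_zero⟩
  obtain ⟨k, hk⟩ := Subgroup.mem_zpowers_iff.mp (addLeft_mem_zpowers w)
  rw [← hk, map_zpow, sign_Cc hp2, one_zpow]

private theorem std (hp2 : p ≠ 2) (x : Equiv.Perm (ZMod p))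
    (hx : x ∈ Subgroup.normalizer ((Subgroup.zpowers (Cc p) : Subgroup (Equiv.Perm (ZMod p))) : Set (Equiv.Perm (ZMod p)))) :
    (Subgroup.normalizer ((Subgroup.zpowers (Cc p) : Subgroup (Equiv.Perm (ZMod p))) : Set (Equiv.Perm (ZMod p))) ⊓ Subgroup.centralizer {x}
        = (Subgroup.normalizer ((Subgroup.zpowers (Cc p) : Subgroup (Equiv.Perm (ZMod p))) : Set (Equiv.Perm (ZMod p))) ⊓ alternatingGroup (ZMod p)) ⊓
            Subgroup.centralizer {x})
      ↔ ∃ y ∈ Subgroup.normalizer ((Subgroup.zpowers (Cc p) : Subgroup (Equiv.Perm (ZMod p))) : Set (Equiv.Perm (ZMod p))), y * Cc p * y⁻¹ = x := by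
  obtain ⟨g, hg, hg1⟩ := exists_gen hp2
  constructor
  · intro heq
    obtain ⟨u, w, rfl⟩ := normalizer_form hx
    by_cases hu : u = 1
    · subst hu
      by_cases hw : w = 0
      · exfalso
        have hx1 : Mu p 1 * Equiv.addLeft w = 1 := by
          rw [hw, map_one, one_mul]
          ext t; simp
        have hmem : Mu p g ∈ Subgroup.normalizer ((Subgroup.zpowers (Cc p) : Subgroup (Equiv.Perm (ZMod p))) : Set (Equiv.Perm (ZMod p))) ⊓
            Subgroup.centralizer {Mu p 1 * Equiv.addLeft w} := by
          refine Subgroup.mem_inf.mpr ⟨Mu_mem_normalizer g, ?_⟩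
          rw [Subgroup.mem_centralizer_singleton_iff, hx1, one_mul, mul_one]
        rw [heq] at hmem
        have := Equiv.Perm.mem_alternatingGroup.mp
          (Subgroup.mem_inf.mp (Subgroup.mem_inf.mp hmem).1).2
        rw [sign_Mu_gen hp2 hg hg1] at this
        exact (by decide : ((-1 : ℤˣ) ≠ 1)) this
      · refine ⟨Mu p (Units.mk0 w hw), Mu_mem_normalizer _, ?_⟩
        have this1 := Mu_conj (Units.mk0 w hw) (1 : ZMod p)
        rw [mul_one] at this1
        rw [show Equiv.addLeft (1 : ZMod p) = Cc p from rfl] at this1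
        rw [this1, map_one, one_mul]
        rfl
    · exfalso
      have huv : (1 : ZMod p) - (u : ZMod p) ≠ 0 := by
        rw [sub_ne_zero]
        exact fun h => hu (Units.ext h.symm)
      set t₀ : ZMod p := (u : ZMod p) * w / (1 - (u : ZMod p)) with ht₀_def
      have ht₀ : (1 - (u : ZMod p)) * t₀ = (u : ZMod p) * w := by
        rw [ht₀_def]; field_simp
      have hxconj : Mu p u * Equiv.addLeft w
          = Equiv.addLeft t₀ * Mu p u * (Equiv.addLeft t₀)⁻¹ := by
        ext t
        simp only [Equiv.Perm.coe_mul, Function.comp_apply, Equiv.coe_addLeft, Mu_apply,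
          Equiv.Perm.inv_def, Equiv.addLeft_symm]
        show (u : ZMod p) * (w + t) = t₀ + (u : ZMod p) * (-t₀ + t)
        linear_combination -ht₀
      set T : Equiv.Perm (ZMod p) := Equiv.addLeft t₀ with hT_def
      set s : Equiv.Perm (ZMod p) := T * Mu p g * T⁻¹ with hs_def
      have hTN : T ∈ Subgroup.normalizer ((Subgroup.zpowers (Cc p) : Subgroup (Equiv.Perm (ZMod p))) : Set (Equiv.Perm (ZMod p))) :=
        Subgroup.le_normalizer (addLeft_mem_zpowers t₀)
      have hsN : s ∈ Subgroup.normalizer ((Subgroup.zpowers (Cc p) : Subgroup (Equiv.Perm (ZMod p))) : Set (Equiv.Perm (ZMod p))) :=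
        mul_mem (mul_mem hTN (Mu_mem_normalizer g)) (inv_mem hTN)
      have key : ∀ A B : Equiv.Perm (ZMod p), (T * A * T⁻¹) * (T * B * T⁻¹) = T * (A * B) * T⁻¹ := by
        intros A B; group
      have hcomm : Mu p u * Mu p g = Mu p g * Mu p u := by
        rw [← map_mul, ← map_mul, mul_comm]
      have hsC : s ∈ Subgroup.centralizer {Mu p u * Equiv.addLeft w} := by
        rw [Subgroup.mem_centralizer_singleton_iff, hxconj, hs_def, key, key, hcomm]
      have hmem : s ∈ Subgroup.normalizer ((Subgroup.zpowers (Cc p) : Subgroup (Equiv.Perm (ZMod p))) : Set (Equiv.Perm (ZMod p))) ⊓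
          Subgroup.centralizer {Mu p u * Equiv.addLeft w} := Subgroup.mem_inf.mpr ⟨hsN, hsC⟩
      rw [heq] at hmem
      have h1 := Equiv.Perm.mem_alternatingGroup.mp
        (Subgroup.mem_inf.mp (Subgroup.mem_inf.mp hmem).1).2
      have h2 : Equiv.Perm.sign s = -1 := by
        rw [hs_def, map_mul, map_mul, map_inv, hT_def, sign_addLeft hp2,
          sign_Mu_gen hp2 hg hg1]
        decide
      rw [h2] at h1
      exact (by decide : ((-1 : ℤˣ) ≠ 1)) h1
  · rintro ⟨y, hyN, rfl⟩
    obtain ⟨u, w, rfl⟩ := normalizer_form hyN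
    have hm : (u : ZMod p) ≠ 0 := u.ne_zero
    have hxeq : (Mu p u * Equiv.addLeft w) * Cc p * (Mu p u * Equiv.addLeft w)⁻¹
        = Equiv.addLeft (u : ZMod p) := by
      ext t
      simp only [Equiv.Perm.coe_mul, Function.comp_apply, Equiv.coe_addLeft, Mu_apply,
        mul_inv_rev, Equiv.Perm.inv_def, Equiv.addLeft_symm, map_inv]
      show (u : ZMod p) * (w + ((1 : ZMod p) + (-w + ((u⁻¹ : (ZMod p)ˣ) : ZMod p) * t)))
          = (u : ZMod p) + t
      have hui : (u : ZMod p) * ((u⁻¹ : (ZMod p)ˣ) : ZMod p) = 1 := by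
        rw [← Units.val_mul, mul_inv_cancel, Units.val_one]
      linear_combination t * hui
    apply le_antisymm
    · intro z hz
      rw [Subgroup.mem_inf] at hz
      obtain ⟨hzN, hzC⟩ := hz
      have hzx := Subgroup.mem_centralizer_singleton_iff.mp hzC
      rw [hxeq] at hzx
      have hzl := commute_addLeft hm z hzx
      have hzA : z ∈ alternatingGroup (ZMod p) := by
        rw [Equiv.Perm.mem_alternatingGroup, hzl, sign_addLeft hp2]
      exact Subgroup.mem_inf.mpr ⟨Subgroup.mem_inf.mpr ⟨hzN, hzA⟩, hzC⟩
    · intro z hz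
      rw [Subgroup.mem_inf] at hz
      exact Subgroup.mem_inf.mpr ⟨(Subgroup.mem_inf.mp hz.1).1, hz.2⟩

end Std

section Transfer

/-- `Equiv.permCongr` as a `MulEquiv`. -/
private def permMulEquiv {α β : Type*} (e : α ≃ β) : Equiv.Perm α ≃* Equiv.Perm β :=
  { e.permCongr with
    map_mul' := fun f g => Equiv.ext fun x => by
      simp [Equiv.permCongr_apply, Equiv.Perm.mul_apply] }

private lemma permMulEquiv_apply {α β : Type*} (e : α ≃ β) (f : Equiv.Perm α) :
    permMulEquiv e f = e.permCongr f := rfl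

private lemma isCycle_permMulEquiv {α β : Type*} (e : α ≃ β) {f : Equiv.Perm α}
    (hf : f.IsCycle) : (permMulEquiv e f).IsCycle := by
  obtain ⟨x, hx, hsc⟩ := hf
  refine ⟨e x, ?_, fun y hy => ?_⟩
  · simp only [permMulEquiv_apply, Equiv.permCongr_apply, Equiv.symm_apply_apply]
    exact fun h => hx (e.injective h)
  · have hy' : f (e.symm y) ≠ e.symm y := by
      intro h
      apply hy
      simp [permMulEquiv_apply, Equiv.permCongr_apply, h]
    obtain ⟨n, hn⟩ := hsc hy'
    refine ⟨n, ?_⟩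
    rw [← map_zpow (permMulEquiv e)]
    simp only [permMulEquiv_apply, Equiv.permCongr_apply, Equiv.symm_apply_apply]
    rw [hn, Equiv.apply_symm_apply]

private lemma support_card_permMulEquiv {α β : Type*} [Fintype α] [DecidableEq α]
    [Fintype β] [DecidableEq β] (e : α ≃ β) (f : Equiv.Perm α) :
    (permMulEquiv e f).support.card = f.support.card := by
  have h : (permMulEquiv e f).support = f.support.image e := by
    ext b
    simp only [Equiv.Perm.mem_support, permMulEquiv_apply, Equiv.permCongr_apply,
      Finset.mem_image]
    constructor
    · intro h
      exact ⟨e.symm b, fun hh => h (by rw [hh, Equiv.apply_symm_apply]),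
        Equiv.apply_symm_apply e b⟩
    · rintro ⟨a', ha', rfl⟩
      simp only [Equiv.symm_apply_apply]
      exact fun hh => ha' (e.injective hh)
  rw [h, Finset.card_image_of_injective _ e.injective]

end Transfer

/-- The normalizer `Y` of `⟨a⟩`, `a` a `p`-cycle in `S_p` (`p` an odd prime),
has exactly one split class contained in `Y ∩ A_p`, namely the `Y`-class of
`a`: for `x ∈ Y ∩ A_p`, `C_Y(x) = C_{Y∩A_p}(x)` iff `x` is `Y`-conjugate
to `a`. -/
theorem stmt_13 (p : ℕ) (hp : p.Prime) (hp2 : p ≠ 2)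
    (a : Equiv.Perm (Fin p)) (ha : a.IsCycle) (hsupp : a.support.card = p)
    (x : Equiv.Perm (Fin p))
    (hx : x ∈ Subgroup.normalizer ((Subgroup.zpowers a : Subgroup (Equiv.Perm (Fin p))) : Set (Equiv.Perm (Fin p))))
    (hxA : x ∈ alternatingGroup (Fin p)) :
    (Subgroup.normalizer ((Subgroup.zpowers a : Subgroup (Equiv.Perm (Fin p))) : Set (Equiv.Perm (Fin p))) ⊓ Subgroup.centralizer {x}
        = (Subgroup.normalizer ((Subgroup.zpowers a : Subgroup (Equiv.Perm (Fin p))) : Set (Equiv.Perm (Fin p))) ⊓ alternatingGroup (Fin p)) ⊓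
            Subgroup.centralizer {x})
      ↔ ∃ y ∈ Subgroup.normalizer ((Subgroup.zpowers a : Subgroup (Equiv.Perm (Fin p))) : Set (Equiv.Perm (Fin p))), y * a * y⁻¹ = x := by
  haveI : Fact p.Prime := ⟨hp⟩
  haveI : NeZero p := ⟨hp.ne_zero⟩
  have ecard : Fintype.card (Fin p) = Fintype.card (ZMod p) := by
    rw [Fintype.card_fin, ZMod.card]
  set e : Fin p ≃ ZMod p := Fintype.equivOfCardEq ecard with he_def
  set φ : Equiv.Perm (Fin p) ≃* Equiv.Perm (ZMod p) := permMulEquiv e with hφ_def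
  have ha1 : (φ a).IsCycle := isCycle_permMulEquiv e ha
  have hs1 : (φ a).support.card = (Cc p).support.card := by
    rw [support_card_permMulEquiv, hsupp, support_Cc, Finset.card_univ, ZMod.card]
  have hconj : IsConj (φ a) (Cc p) := ha1.isConj isCycle_Cc hs1
  obtain ⟨k, hk⟩ := isConj_iff.mp hconj
  set ψ : Equiv.Perm (Fin p) ≃* Equiv.Perm (ZMod p) :=
    φ.trans (MulAut.conj k : Equiv.Perm (ZMod p) ≃* Equiv.Perm (ZMod p)) with hψ_def
  have hψa : ψ a = Cc p := by
    show (MulAut.conj k) (φ a) = Cc p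
    rw [MulAut.conj_apply, hk]
  have hsign : ∀ y : Equiv.Perm (Fin p), Equiv.Perm.sign (ψ y) = Equiv.Perm.sign y := by
    intro y
    have h1 : Equiv.Perm.sign (φ y) = Equiv.Perm.sign y := Equiv.Perm.sign_permCongr e y
    show Equiv.Perm.sign ((MulAut.conj k) (φ y)) = _
    rw [MulAut.conj_apply, map_mul, map_mul, map_inv, ← h1]
    rcases Int.units_eq_one_or (Equiv.Perm.sign k) with h | h <;> simp [h]
  have hzp : ∀ h : Equiv.Perm (Fin p),
      h ∈ Subgroup.zpowers a ↔ ψ h ∈ Subgroup.zpowers (Cc p) := by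
    intro h
    rw [← hψa, Subgroup.mem_zpowers_iff, Subgroup.mem_zpowers_iff]
    constructor
    · rintro ⟨n, hn⟩
      exact ⟨n, by rw [← map_zpow, hn]⟩
    · rintro ⟨n, hn⟩
      exact ⟨n, ψ.injective (by rw [map_zpow, hn])⟩
  have hN : ∀ y : Equiv.Perm (Fin p),
      y ∈ Subgroup.normalizer ((Subgroup.zpowers a : Subgroup (Equiv.Perm (Fin p))) : Set (Equiv.Perm (Fin p))) ↔ ψ y ∈ Subgroup.normalizer ((Subgroup.zpowers (Cc p) : Subgroup (Equiv.Perm (ZMod p))) : Set (Equiv.Perm (ZMod p))) := by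
    intro y
    rw [Subgroup.mem_normalizer_iff, Subgroup.mem_normalizer_iff]
    constructor
    · intro H h
      rw [show h = ψ (ψ.symm h) from (ψ.apply_symm_apply h).symm, ← map_inv, ← map_mul,
        ← map_mul, ← hzp, ← hzp]
      exact H _
    · intro H h
      rw [hzp, hzp, map_mul, map_mul, map_inv]
      exact H _
  have hC : ∀ y : Equiv.Perm (Fin p),
      y ∈ Subgroup.centralizer {x} ↔ ψ y ∈ Subgroup.centralizer {ψ x} := by
    intro y
    rw [Subgroup.mem_centralizer_singleton_iff, Subgroup.mem_centralizer_singleton_iff,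
      ← map_mul, ← map_mul]
    exact ⟨fun h => by rw [h], fun h => ψ.injective h⟩
  have hA : ∀ y : Equiv.Perm (Fin p),
      y ∈ alternatingGroup (Fin p) ↔ ψ y ∈ alternatingGroup (ZMod p) := by
    intro y
    rw [Equiv.Perm.mem_alternatingGroup, Equiv.Perm.mem_alternatingGroup, hsign]
  have main := std hp2 (ψ x) ((hN x).mp hx)
  have heqiff : (Subgroup.normalizer ((Subgroup.zpowers a : Subgroup (Equiv.Perm (Fin p))) : Set (Equiv.Perm (Fin p))) ⊓ Subgroup.centralizer {x}
        = (Subgroup.normalizer ((Subgroup.zpowers a : Subgroup (Equiv.Perm (Fin p))) : Set (Equiv.Perm (Fin p))) ⊓ alternatingGroup (Fin p)) ⊓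
            Subgroup.centralizer {x})
      ↔ (Subgroup.normalizer ((Subgroup.zpowers (Cc p) : Subgroup (Equiv.Perm (ZMod p))) : Set (Equiv.Perm (ZMod p))) ⊓ Subgroup.centralizer {ψ x}
        = (Subgroup.normalizer ((Subgroup.zpowers (Cc p) : Subgroup (Equiv.Perm (ZMod p))) : Set (Equiv.Perm (ZMod p))) ⊓ alternatingGroup (ZMod p)) ⊓
            Subgroup.centralizer {ψ x}) := by
    constructor
    · intro h
      ext z
      obtain ⟨z₀, rfl⟩ := ψ.surjective z
      have hz := SetLike.ext_iff.mp h z₀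
      simp only [Subgroup.mem_inf] at hz ⊢
      rw [← hN, ← hA, ← hC]
      exact hz
    · intro h
      ext z₀
      have hz := SetLike.ext_iff.mp h (ψ z₀)
      simp only [Subgroup.mem_inf] at hz ⊢
      rw [hN, hA, hC]
      exact hz
  rw [heqiff, main]
  constructor
  · rintro ⟨y', hy'N, hy'c⟩
    refine ⟨ψ.symm y', ?_, ?_⟩
    · rw [hN, ψ.apply_symm_apply]
      exact hy'N
    · apply ψ.injective
      rw [map_mul, map_mul, map_inv, ψ.apply_symm_apply, hψa]
      exact hy'c
  · rintro ⟨y, hyN, hyc⟩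
    refine ⟨ψ y, (hN y).mp hyN, ?_⟩
    rw [← hψa, ← map_inv, ← map_mul, ← map_mul, hyc]
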